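/- Let δ > 0, and let M, N : [0,T₁) → ℝ be differentiable with N(t) > 0, M'(t) ≤ −M(t)² + δN(t), and N'(t) = −M(t)N(t) for all t ∈ [0,T₁), where M(0) < −√(2δN(0)) and T₁ = −(M(0)+√(M(0)²−2δN(0)))/(δN(0)). Then N(t) → +∞ and M(t) → −∞ as t → T₁⁻. -/

import Mathlib

open Set Filter

/-- Blow-up at `T₁`: if `N > 0`, `M' ≤ -M² + δN`, `N' = -MN` on `[0,T₁)` with
`M(0) < -√(2δN(0))` and `T₁ = -(M(0) + √(M(0)² - 2δN(0)))/(δN(0))`, then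
`N(t) → +∞` and `M(t) → -∞` as `t → T₁⁻`. -/
theorem riccati_blow_up_at_T₁ (δ T₁ : ℝ) (hδ : 0 < δ)
    (M N M' : ℝ → ℝ) (hN0 : 0 < N 0)
    (hNpos : ∀ t ∈ Ico (0:ℝ) T₁, 0 < N t)
    (hM : ∀ t ∈ Ico (0:ℝ) T₁, HasDerivAt M (M' t) t)
    (hM' : ∀ t ∈ Ico (0:ℝ) T₁, M' t ≤ -(M t) ^ 2 + δ * N t)
    (hN : ∀ t ∈ Ico (0:ℝ) T₁, HasDerivAt N (-(M t * N t)) t)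
    (hM0 : M 0 < -Real.sqrt (2 * δ * N 0))
    (hT₁ : T₁ = -((M 0 + Real.sqrt ((M 0) ^ 2 - 2 * δ * N 0)) / (δ * N 0))) :
    Tendsto N (nhdsWithin T₁ (Iio T₁)) atTop ∧
    Tendsto M (nhdsWithin T₁ (Iio T₁)) atBot := by
  have hN0' : N 0 ≠ 0 := ne_of_gt hN0
  have h2δN : (0:ℝ) ≤ 2 * δ * N 0 := by positivity
  have hM0neg : M 0 < 0 := lt_of_lt_of_le hM0 (by simpa using Real.sqrt_nonneg (2 * δ * N 0))
  have hM0sq : 2 * δ * N 0 < (M 0) ^ 2 := by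
    nlinarith [Real.sq_sqrt h2δN, Real.sqrt_nonneg (2 * δ * N 0)]
  set s : ℝ := Real.sqrt ((M 0) ^ 2 - 2 * δ * N 0) with hs_def
  have hs2 : s ^ 2 = (M 0) ^ 2 - 2 * δ * N 0 := Real.sq_sqrt (by linarith)
  have hs_pos : 0 < s := Real.sqrt_pos.2 (by linarith)
  have hsM : s < -(M 0) := by nlinarith
  have hT₁pos : 0 < T₁ := by
    rw [hT₁]
    exact neg_pos.2 (div_neg_of_neg_of_pos (by linarith) (by positivity))
  have h0mem : (0:ℝ) ∈ Ico (0:ℝ) T₁ := ⟨le_refl 0, hT₁pos⟩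
  -- derivative of 1/N
  have hq : ∀ t ∈ Ico (0:ℝ) T₁, HasDerivAt (fun u => (N u)⁻¹) (M t / N t) t := by
    intro t ht
    have hne : N t ≠ 0 := ne_of_gt (hNpos t ht)
    have h := (hN t ht).inv hne
    refine h.congr_deriv ?_
    field_simp
  -- F := M/N - δt is antitone on [0, T₁)
  have hFder : ∀ t ∈ Ico (0:ℝ) T₁,
      HasDerivAt (fun u => M u / N u - δ * u) ((M' t + (M t) ^ 2) / N t - δ) t := by
    intro t ht
    have hne : N t ≠ 0 := ne_of_gt (hNpos t ht)
    have h1 := (hM t ht).div (hN t ht) hne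
    have h2 := (hasDerivAt_id t).const_mul δ
    have h := h1.sub h2
    refine h.congr_deriv ?_
    field_simp
    ring
  have hFanti : AntitoneOn (fun u => M u / N u - δ * u) (Ico (0:ℝ) T₁) := by
    apply antitoneOn_of_deriv_nonpos (convex_Ico 0 T₁)
    · exact fun t ht => (hFder t ht).continuousAt.continuousWithinAt
    · intro x hx
      rw [interior_Ico] at hx
      exact ((hFder x (Ioo_subset_Ico_self hx)).differentiableAt).differentiableWithinAt
    · intro x hx
      rw [interior_Ico] at hx
      have hx' : x ∈ Ico (0:ℝ) T₁ := Ioo_subset_Ico_self hx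
      rw [(hFder x hx').deriv]
      have h := hM' x hx'
      have hNx := hNpos x hx'
      rw [sub_nonpos, div_le_iff₀ hNx]
      nlinarith
  have hP_le : ∀ t ∈ Ico (0:ℝ) T₁, M t / N t ≤ M 0 / N 0 + δ * t := by
    intro t ht
    have h := hFanti h0mem ht ht.1
    dsimp only at h
    linarith
  -- G := 1/N - Q is antitone on [0, T₁)
  have hGder : ∀ t ∈ Ico (0:ℝ) T₁,
      HasDerivAt (fun u => (N u)⁻¹ - ((N 0)⁻¹ + (M 0 / N 0) * u + δ / 2 * u ^ 2))
        (M t / N t - (M 0 / N 0 + δ * t)) t := by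
    intro t ht
    have h1 := hq t ht
    have h2 : HasDerivAt (fun u : ℝ => (N 0)⁻¹ + (M 0 / N 0) * u + δ / 2 * u ^ 2)
        (M 0 / N 0 + δ * t) t := by
      have ha := ((hasDerivAt_id t).const_mul (M 0 / N 0)).const_add ((N 0)⁻¹)
      have hb := (hasDerivAt_pow 2 t).const_mul (δ / 2)
      have h := ha.add hb
      refine h.congr_deriv ?_
      ring
    exact h1.sub h2
  have hGanti : AntitoneOn
      (fun u => (N u)⁻¹ - ((N 0)⁻¹ + (M 0 / N 0) * u + δ / 2 * u ^ 2)) (Ico (0:ℝ) T₁) := by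
    apply antitoneOn_of_deriv_nonpos (convex_Ico 0 T₁)
    · exact fun t ht => (hGder t ht).continuousAt.continuousWithinAt
    · intro x hx
      rw [interior_Ico] at hx
      exact ((hGder x (Ioo_subset_Ico_self hx)).differentiableAt).differentiableWithinAt
    · intro x hx
      rw [interior_Ico] at hx
      have hx' : x ∈ Ico (0:ℝ) T₁ := Ioo_subset_Ico_self hx
      rw [(hGder x hx').deriv]
      have := hP_le x hx'
      linarith
  set Q : ℝ → ℝ := fun u => (N 0)⁻¹ + (M 0 / N 0) * u + δ / 2 * u ^ 2 with hQ_def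
  have hq_le : ∀ t ∈ Ico (0:ℝ) T₁, (N t)⁻¹ ≤ Q t := by
    intro t ht
    have h := hGanti h0mem ht ht.1
    dsimp only at h
    have h0 : (N 0)⁻¹ - ((N 0)⁻¹ + (M 0 / N 0) * 0 + δ / 2 * 0 ^ 2) = 0 := by ring
    simp only [hQ_def]
    linarith [h, h0]
  have hQpos : ∀ t ∈ Ico (0:ℝ) T₁, 0 < Q t := fun t ht =>
    lt_of_lt_of_le (inv_pos.2 (hNpos t ht)) (hq_le t ht)
  have hNQ : ∀ t ∈ Ico (0:ℝ) T₁, (Q t)⁻¹ ≤ N t := by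
    intro t ht
    have h1 : (0:ℝ) < (N t)⁻¹ := inv_pos.2 (hNpos t ht)
    have h2 := hq_le t ht
    have := inv_anti₀ h1 h2
    rwa [inv_inv] at this
  have hQT : Q T₁ = 0 := by
    simp only [hQ_def]
    rw [hT₁]
    field_simp
    nlinarith [hs2]
  have hQcont : Continuous Q :=
    (continuous_const.add (continuous_const.mul continuous_id)).add
      (continuous_const.mul (continuous_pow 2))
  have hmem : Ico (0:ℝ) T₁ ∈ nhdsWithin T₁ (Iio T₁) := by
    have h1 : Icc (0:ℝ) T₁ ∈ nhdsWithin T₁ (Iio T₁) := Icc_mem_nhdsLT hT₁pos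
    have h2 := inter_mem h1 self_mem_nhdsWithin
    exact mem_of_superset h2 fun x hx => ⟨hx.1.1, hx.2⟩
  have hNtop : Tendsto N (nhdsWithin T₁ (Iio T₁)) atTop := by
    have hQtend : Tendsto Q (nhdsWithin T₁ (Iio T₁)) (nhdsWithin 0 (Ioi 0)) := by
      apply tendsto_nhdsWithin_of_tendsto_nhds_of_eventually_within
      · have := (hQcont.tendsto T₁).mono_left (nhdsWithin_le_nhds (s := Iio T₁))
        rwa [hQT] at this
      · exact eventually_of_mem hmem fun t ht => hQpos t ht
    have h1 : Tendsto (fun t => (Q t)⁻¹) (nhdsWithin T₁ (Iio T₁)) atTop :=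
      tendsto_inv_nhdsGT_zero.comp hQtend
    exact tendsto_atTop_mono' _ (eventually_of_mem hmem fun t ht => hNQ t ht) h1
  refine ⟨hNtop, ?_⟩
  have hc : M 0 / N 0 + δ * T₁ = -(s / N 0) := by
    rw [hT₁]
    field_simp
    ring
  have hMle : ∀ t ∈ Ico (0:ℝ) T₁, M t ≤ -(s / N 0) * N t := by
    intro t ht
    have h1 := hP_le t ht
    have h2 : M t / N t ≤ -(s / N 0) := by
      have h3 : δ * t ≤ δ * T₁ := mul_le_mul_of_nonneg_left ht.2.le hδ.le
      linarith
    have hNx := hNpos t ht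
    calc M t = (M t / N t) * N t := by field_simp
      _ ≤ -(s / N 0) * N t := mul_le_mul_of_nonneg_right h2 hNx.le
  have hbot : Tendsto (fun t => -(s / N 0) * N t) (nhdsWithin T₁ (Iio T₁)) atBot := by
    have hr : -(s / N 0) < 0 := neg_neg_iff_pos.2 (div_pos hs_pos hN0)
    exact (tendsto_const_mul_atBot_of_neg hr).2 hNtop
  exact tendsto_atBot_mono' _ (eventually_of_mem hmem fun t ht => hMle t ht) hbot
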